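/- Let q ≥ 2 be a real number and let m ≥ 3 be an integer, and set a = q^{−2^m}. Then 2(1 + a)·(2/(q² + 1))^{2^{m−1}} − 8a ≥ 0, and (1 − a)^{−2} · √( 2(1 + a)·(2/(q² + 1))^{2^{m−1}} − 8a ) ≤ √2 · (16/15) · (2/q²)^{2^{m−2}}. -/
import Mathlib


/-- For a real `q ≥ 2` and an integer `m ≥ 3`, with `a = q^{−2^m}`,
the quantity `2(1 + a)(2/(q² + 1))^{2^{m−1}} − 8a` is nonnegative and
`(1 − a)⁻² √(2(1 + a)(2/(q² + 1))^{2^{m−1}} − 8a) ≤ √2 · (16/15) · (2/q²)^{2^{m−2}}`. -/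
theorem statement15 (q : ℝ) (hq : 2 ≤ q) (m : ℕ) (hm : 3 ≤ m)
    (a : ℝ) (ha : a = (q ^ (2 ^ m : ℕ))⁻¹) :
    0 ≤ 2 * (1 + a) * (2 / (q ^ 2 + 1)) ^ (2 ^ (m - 1) : ℕ) - 8 * a ∧
    ((1 - a) ^ 2)⁻¹ *
        Real.sqrt (2 * (1 + a) * (2 / (q ^ 2 + 1)) ^ (2 ^ (m - 1) : ℕ) - 8 * a) ≤
      Real.sqrt 2 * (16 / 15) * (2 / q ^ 2) ^ (2 ^ (m - 2) : ℕ) := by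
  have hq0 : (0:ℝ) < q := by linarith
  have hq2 : (4:ℝ) ≤ q ^ 2 := by nlinarith
  have hq2pos : (0:ℝ) < q ^ 2 := by positivity
  set n1 : ℕ := 2 ^ (m - 1) with hn1
  set n2 : ℕ := 2 ^ (m - 2) with hn2
  have hn1ge : 4 ≤ n1 := by
    have : (2:ℕ)^2 ≤ 2 ^ (m-1) := Nat.pow_le_pow_right (by norm_num) (by omega)
    simpa using this
  have hmm : (2:ℕ) ^ m = 2 * n1 := by
    rw [hn1, ← pow_succ']
    congr 1
    omega
  have hP : q ^ ((2:ℕ) ^ m) = (q ^ 2) ^ n1 := by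
    rw [hmm, pow_mul]
  have haP : a = ((q ^ 2) ^ n1)⁻¹ := by rw [ha, hP]
  have hPpos : (0:ℝ) < (q ^ 2) ^ n1 := by positivity
  have ha0 : 0 < a := by rw [haP]; positivity
  have hP256 : (256:ℝ) ≤ (q ^ 2) ^ n1 := by
    calc (256:ℝ) = 4 ^ (4:ℕ) := by norm_num
    _ ≤ 4 ^ n1 := pow_le_pow_right₀ (by norm_num) hn1ge
    _ ≤ (q ^ 2) ^ n1 := pow_le_pow_left₀ (by norm_num) hq2 n1
  have ha1 : a ≤ 1/256 := by
    rw [haP]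
    rw [inv_le_comm₀ (by positivity) (by norm_num)]
    linarith
  set x : ℝ := (2 / (q ^ 2 + 1)) ^ n1 with hx
  have hxpos : 0 < x := by positivity
  have hb : (8/5 : ℝ) ≤ 2 * q ^ 2 / (q ^ 2 + 1) := by
    rw [div_le_div_iff₀ (by norm_num) (by positivity)]
    nlinarith
  have hx4a : 4 * a ≤ x := by
    have h1 : (4:ℝ) ≤ (2 * q ^ 2 / (q ^ 2 + 1)) ^ n1 := by
      calc (4:ℝ) ≤ (8/5) ^ (4:ℕ) := by norm_num
      _ ≤ (8/5) ^ n1 := pow_le_pow_right₀ (by norm_num) hn1ge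
      _ ≤ (2 * q ^ 2 / (q ^ 2 + 1)) ^ n1 := pow_le_pow_left₀ (by norm_num) hb n1
    have h2 : (2 * q ^ 2 / (q ^ 2 + 1)) ^ n1 = x * (q ^ 2) ^ n1 := by
      rw [hx, ← mul_pow]
      congr 1
      field_simp
    rw [haP, mul_comm (4:ℝ), ← div_eq_inv_mul, div_le_iff₀ hPpos]
    rw [h2] at h1
    linarith
  have hnonneg : 0 ≤ 2 * (1 + a) * x - 8 * a := by nlinarith
  refine ⟨hnonneg, ?_⟩
  set y : ℝ := (2 / q ^ 2) ^ n2 with hy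
  have hy0 : 0 < y := by positivity
  have hxy : x ≤ y ^ 2 := by
    have hsq : y ^ 2 = (2 / q ^ 2) ^ n1 := by
      rw [hy, ← pow_mul]
      congr 1
      rw [hn1, hn2]
      have : m - 1 = (m - 2) + 1 := by omega
      rw [this, pow_succ]
    rw [hsq, hx]
    apply pow_le_pow_left₀ (by positivity)
    apply div_le_div_of_nonneg_left (by norm_num) hq2pos
    linarith
  have h1a : (0:ℝ) < 1 - a := by linarith
  have h1 : Real.sqrt (2 * (1 + a) * x - 8 * a) ≤ Real.sqrt (2 * (1 + a)) * y := by
    have heq : Real.sqrt (2 * (1 + a) * y ^ 2) = Real.sqrt (2 * (1 + a)) * y := by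
      rw [Real.sqrt_mul (by positivity : (0:ℝ) ≤ 2 * (1 + a)) (y ^ 2),
        Real.sqrt_sq hy0.le]
    rw [← heq]
    apply Real.sqrt_le_sqrt
    nlinarith
  have hscalar : ((1 - a) ^ 2)⁻¹ * Real.sqrt (2 * (1 + a)) ≤ Real.sqrt 2 * (16/15) := by
    rw [inv_mul_le_iff₀ (by positivity)]
    have heq : (1 - a) ^ 2 * (Real.sqrt 2 * (16/15)) =
        Real.sqrt (2 * ((16/15) * (1 - a) ^ 2) ^ 2) := by
      rw [Real.sqrt_mul (by norm_num), Real.sqrt_sq (by positivity)]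
      ring
    rw [heq]
    apply Real.sqrt_le_sqrt
    nlinarith [sq_nonneg (1 - a), sq_nonneg a, sq_nonneg (a * (1 - a))]
  calc ((1 - a) ^ 2)⁻¹ * Real.sqrt (2 * (1 + a) * x - 8 * a)
      ≤ ((1 - a) ^ 2)⁻¹ * (Real.sqrt (2 * (1 + a)) * y) := by
        apply mul_le_mul_of_nonneg_left h1 (by positivity)
    _ = (((1 - a) ^ 2)⁻¹ * Real.sqrt (2 * (1 + a))) * y := by ring
    _ ≤ (Real.sqrt 2 * (16/15)) * y := mul_le_mul_of_nonneg_right hscalar hy0.le
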